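/- Let 𝒮 be a split system on a nonempty finite set X, let Φ be the equal splits index on 𝒞(𝒮), and let τ : 𝕃(𝒮) → 𝕃(𝒞(𝒮)) be defined by (τ(λ))(C) = (1/2)·λ(C|(X∖C)) for each C ∈ 𝒞(𝒮). Then Ψ_τ(Φ) = Φ∘τ is a complete linear phylogenetic diversity index on 𝒮; that is, it is ℝ-linear and Σ_{x∈X} ((Ψ_τ(Φ))(λ))(x) = Σ_{S∈𝒮} λ(S) holds for all λ ∈ 𝕃(𝒮). -/

import Mathlib

open Finset

/-- A split of `X`: an unordered bipartition `{A, B}` of `X` into two nonempty parts. -/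
def IsSplit {α : Type*} [Fintype α] [DecidableEq α] (S : Finset (Finset α)) : Prop :=
  ∃ A B : Finset α, A.Nonempty ∧ B.Nonempty ∧ A ∪ B = Finset.univ ∧ A ∩ B = ∅ ∧
    S = {A, B}

/-- The cluster system `𝒞(𝒮)` associated with a split system `𝒮`. -/
def Cl {α : Type*} [DecidableEq α] (𝒮 : Finset (Finset (Finset α))) :
    Finset (Finset α) :=
  𝒮.biUnion id

/-- The set of children of a cluster `C` in a cluster system `𝒞`. -/
def ch {α : Type*} [DecidableEq α] (𝒞 : Finset (Finset α)) (C : Finset α) :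
    Finset (Finset α) :=
  𝒞.filter fun C' => C' ⊂ C ∧ ∀ C'' ∈ 𝒞, ¬(C' ⊂ C'' ∧ C'' ⊂ C)

/-- The elements of `C` not contained in any child of `C`. -/
def cl {α : Type*} [DecidableEq α] (𝒞 : Finset (Finset α)) (C : Finset α) :
    Finset α :=
  C.filter fun x => ∀ C' ∈ ch 𝒞 C, x ∉ C'

/-- The equal splits coefficients `m_x(C)`, defined recursively. -/
noncomputable def m {α : Type*} [DecidableEq α] (𝒞 : Finset (Finset α)) (x : α)
    (C : Finset α) : ℝ :=
  if x ∉ C then 0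
  else if x ∈ cl 𝒞 C then 1 / (((ch 𝒞 C).card : ℝ) + ((cl 𝒞 C).card : ℝ))
  else ∑ C' ∈ (ch 𝒞 C).attach,
    m 𝒞 x C'.1 / (((ch 𝒞 C).card : ℝ) + ((cl 𝒞 C).card : ℝ))
termination_by C.card
decreasing_by
  have h : C'.1 ⊂ C := by
    have h2 := C'.2
    simp only [ch, Finset.mem_filter] at h2
    exact h2.2.1
  exact Finset.card_lt_card h

/-- The equal splits index on a cluster system `𝒞`. -/
noncomputable def ES {α : Type*} [DecidableEq α] (𝒞 : Finset (Finset α))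
    (ω : ↥𝒞 → ℝ) (x : α) : ℝ :=
  ∑ C : ↥𝒞, m 𝒞 x C.1 * ω C


lemma m_eq_zero {α : Type*} [DecidableEq α] (𝒞 : Finset (Finset α)) {x : α} {C : Finset α}
    (h : x ∉ C) : m 𝒞 x C = 0 := by
  rw [m]; simp [h]

lemma sum_m_eq_one {α : Type*} [Fintype α] [DecidableEq α] (𝒞 : Finset (Finset α))
    (h𝒞 : ∀ D ∈ 𝒞, D.Nonempty) (C : Finset α) (hC : C.Nonempty) :
    ∑ x : α, m 𝒞 x C = 1 := by
  induction C using Finset.strongInduction with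
  | _ C ih =>
    set k : ℝ := ((ch 𝒞 C).card : ℝ) + ((cl 𝒞 C).card : ℝ) with hkdef
    have hclsub : cl 𝒞 C ⊆ C := by
      intro x hx
      simp only [cl, Finset.mem_filter] at hx
      exact hx.1
    have hknz : k ≠ 0 := by
      have h1 : (ch 𝒞 C).Nonempty ∨ (cl 𝒞 C).Nonempty := by
        by_contra hcon
        push_neg at hcon
        obtain ⟨h1, h2⟩ := hcon
        have : cl 𝒞 C = C := by
          unfold cl; rw [h1]; simp
        rw [this] at h2
        exact hC.ne_empty h2
      have : (0:ℝ) < k := by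
        rcases h1 with h | h
        · have : 0 < (ch 𝒞 C).card := Finset.card_pos.2 h
          have h2 : (0:ℝ) < ((ch 𝒞 C).card : ℝ) := by exact_mod_cast this
          have h3 : (0:ℝ) ≤ ((cl 𝒞 C).card : ℝ) := by positivity
          linarith
        · have : 0 < (cl 𝒞 C).card := Finset.card_pos.2 h
          have h2 : (0:ℝ) < ((cl 𝒞 C).card : ℝ) := by exact_mod_cast this
          have h3 : (0:ℝ) ≤ ((ch 𝒞 C).card : ℝ) := by positivity
          linarith
      linarith
    have hsumC : ∑ x : α, m 𝒞 x C = ∑ x ∈ C, m 𝒞 x C :=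
      (Finset.sum_subset (Finset.subset_univ C) (fun x _ hx => m_eq_zero 𝒞 hx)).symm
    have hsplit : ∑ x ∈ C \ cl 𝒞 C, m 𝒞 x C + ∑ x ∈ cl 𝒞 C, m 𝒞 x C
        = ∑ x ∈ C, m 𝒞 x C := Finset.sum_sdiff hclsub
    have hsum1 : ∑ x ∈ cl 𝒞 C, m 𝒞 x C = ((cl 𝒞 C).card : ℝ) * (1 / k) := by
      have hterm : ∀ x ∈ cl 𝒞 C, m 𝒞 x C = 1 / k := by
        intro x hx
        rw [m]
        have hxC : x ∈ C := hclsub hx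
        simp only [hxC, not_true_eq_false, if_false, hx, if_true]
        rw [hkdef]
      rw [Finset.sum_congr rfl hterm, Finset.sum_const, nsmul_eq_mul]
    have hchild : ∀ C' ∈ ch 𝒞 C, C' ⊂ C ∧ C'.Nonempty := by
      intro C' hC'
      simp only [ch, Finset.mem_filter] at hC'
      exact ⟨hC'.2.1, h𝒞 C' hC'.1⟩
    have hsum2 : ∑ x ∈ C \ cl 𝒞 C, m 𝒞 x C = ((ch 𝒞 C).card : ℝ) * (1 / k) := by
      have hterm : ∀ x ∈ C \ cl 𝒞 C,
          m 𝒞 x C = ∑ C' ∈ (ch 𝒞 C).attach, m 𝒞 x C'.1 / k := by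
        intro x hx
        rw [Finset.mem_sdiff] at hx
        rw [m]
        simp only [hx.1, not_true_eq_false, if_false, hx.2, if_false]
        rw [hkdef]
      rw [Finset.sum_congr rfl hterm, Finset.sum_comm]
      have hinner : ∀ C' ∈ (ch 𝒞 C).attach,
          ∑ x ∈ C \ cl 𝒞 C, m 𝒞 x C'.1 / k = 1 / k := by
        intro C' _
        obtain ⟨hsub, hne⟩ := hchild C'.1 C'.2
        rw [← Finset.sum_div]
        congr 1
        have heq : ∑ x ∈ C \ cl 𝒞 C, m 𝒞 x C'.1 = ∑ x : α, m 𝒞 x C'.1 := by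
          apply Finset.sum_subset (Finset.subset_univ _)
          intro x _ hx
          rw [Finset.mem_sdiff] at hx
          by_cases hxC : x ∈ C
          · have hxcl : x ∈ cl 𝒞 C := by
              by_contra hcon
              exact hx ⟨hxC, hcon⟩
            have : x ∉ C'.1 := by
              simp only [cl, Finset.mem_filter] at hxcl
              exact hxcl.2 C'.1 C'.2
            exact m_eq_zero 𝒞 this
          · exact m_eq_zero 𝒞 (fun h => hxC (hsub.1 h))
        rw [heq]
        exact ih C'.1 hsub hne
      rw [Finset.sum_congr rfl hinner, Finset.sum_const, nsmul_eq_mul,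
        Finset.card_attach]
    rw [hsumC, ← hsplit, hsum1, hsum2]
    field_simp
    exact hkdef.symm

lemma split_pair {α : Type*} [Fintype α] [DecidableEq α]
    (𝒮 : Finset (Finset (Finset α))) (h𝒮' : ∀ S ∈ 𝒮, IsSplit S)
    {S : Finset (Finset α)} (hS : S ∈ 𝒮) {C : Finset α} (hC : C ∈ S) :
    C.Nonempty ∧ Cᶜ.Nonempty ∧ S = {C, Cᶜ} := by
  obtain ⟨A, B, hA, hB, hU, hI, rfl⟩ := h𝒮' S hS
  have hBA : B = Aᶜ := by
    ext x
    simp only [Finset.mem_compl]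
    constructor
    · intro hxB hxA
      have : x ∈ A ∩ B := Finset.mem_inter.2 ⟨hxA, hxB⟩
      rw [hI] at this
      exact absurd this (Finset.notMem_empty x)
    · intro hxA
      have : x ∈ A ∪ B := by rw [hU]; exact Finset.mem_univ x
      rcases Finset.mem_union.1 this with h | h
      · exact absurd h hxA
      · exact h
  subst hBA
  rcases Finset.mem_insert.1 hC with rfl | hC
  · exact ⟨hA, hB, rfl⟩
  · rw [Finset.mem_singleton] at hC
    subst hC
    refine ⟨hB, by rwa [compl_compl], ?_⟩
    rw [compl_compl, Finset.pair_comm]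

/-- If `Φ` is the equal splits index on `𝒞(𝒮)` and `(τ λ)(C) = (1/2)·λ(C|(X∖C))`,
then `Ψ_τ(Φ) = Φ ∘ τ` is a complete linear phylogenetic diversity index on `𝒮`. -/
theorem stmt15 {α : Type*} [Fintype α] [DecidableEq α] [Nonempty α]
    (𝒮 : Finset (Finset (Finset α))) (h𝒮 : 𝒮.Nonempty)
    (h𝒮' : ∀ S ∈ 𝒮, IsSplit S)
    (τ : (↥𝒮 → ℝ) → (↥(Cl 𝒮) → ℝ))
    (hτ : ∀ (lam : ↥𝒮 → ℝ) (C : ↥(Cl 𝒮))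
        (hS : ({C.1, C.1ᶜ} : Finset (Finset α)) ∈ 𝒮),
      τ lam C = (1 / 2) * lam ⟨{C.1, C.1ᶜ}, hS⟩) :
    -- Ψ_τ(Φ) is linear
    (∀ (a : ℝ) (lam₁ lam₂ : ↥𝒮 → ℝ),
        ES (Cl 𝒮) (τ (a • lam₁ + lam₂))
          = a • ES (Cl 𝒮) (τ lam₁) + ES (Cl 𝒮) (τ lam₂))
    -- Ψ_τ(Φ) is complete
    ∧ (∀ lam : ↥𝒮 → ℝ, ∑ x : α, ES (Cl 𝒮) (τ lam) x = ∑ S : ↥𝒮, lam S) := by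
  classical
  -- basic facts about clusters
  have hmem : ∀ C ∈ Cl 𝒮, C.Nonempty ∧ ({C, Cᶜ} : Finset (Finset α)) ∈ 𝒮 := by
    intro C hC
    simp only [Cl, Finset.mem_biUnion, id] at hC
    obtain ⟨S, hS, hCS⟩ := hC
    obtain ⟨h1, _, h3⟩ := split_pair 𝒮 h𝒮' hS hCS
    exact ⟨h1, h3 ▸ hS⟩
  have hne : ∀ D ∈ Cl 𝒮, D.Nonempty := fun D hD => (hmem D hD).1
  constructor
  · -- linearity
    intro a lam₁ lam₂
    funext x
    have hτlin : ∀ C : ↥(Cl 𝒮),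
        τ (a • lam₁ + lam₂) C = a * τ lam₁ C + τ lam₂ C := by
      intro C
      have hS := (hmem C.1 C.2).2
      rw [hτ _ _ hS, hτ _ _ hS, hτ _ _ hS]
      simp only [Pi.add_apply, Pi.smul_apply, smul_eq_mul]
      ring
    simp only [ES, Pi.add_apply, Pi.smul_apply, smul_eq_mul]
    rw [Finset.mul_sum, ← Finset.sum_add_distrib]
    refine Finset.sum_congr rfl fun C _ => ?_
    rw [hτlin]
    ring
  · -- completeness
    intro lam
    have hswap : ∑ x : α, ES (Cl 𝒮) (τ lam) x
        = ∑ C : ↥(Cl 𝒮), τ lam C := by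
      simp only [ES]
      rw [Finset.sum_comm]
      refine Finset.sum_congr rfl fun C _ => ?_
      rw [← Finset.sum_mul, sum_m_eq_one (Cl 𝒮) hne C.1 (hne C.1 C.2), one_mul]
    rw [hswap]
    -- express both sides via total functions
    set g : Finset α → ℝ := fun C =>
      if h : ({C, Cᶜ} : Finset (Finset α)) ∈ 𝒮 then (1 / 2) * lam ⟨{C, Cᶜ}, h⟩ else 0
      with hg
    set f : Finset (Finset α) → ℝ := fun S =>
      if h : S ∈ 𝒮 then lam ⟨S, h⟩ else 0 with hf
    have h1 : ∑ C : ↥(Cl 𝒮), τ lam C = ∑ C ∈ Cl 𝒮, g C := by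
      rw [← Finset.sum_coe_sort (Cl 𝒮) g]
      refine Finset.sum_congr rfl fun C _ => ?_
      have hS := (hmem C.1 C.2).2
      rw [hτ _ _ hS, hg]
      simp only [dif_pos hS]
    have h2 : ∑ S : ↥𝒮, lam S = ∑ S ∈ 𝒮, f S := by
      rw [← Finset.sum_coe_sort 𝒮 f]
      refine Finset.sum_congr rfl fun S _ => ?_
      rw [hf]
      simp only [dif_pos S.2]
    rw [h1, h2]
    -- disjointness of the splits
    have hdisj : (𝒮 : Set (Finset (Finset α))).PairwiseDisjoint id := by
      intro S hS T hT hST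
      simp only [Function.onFun, id]
      rw [Finset.disjoint_left]
      intro C hCS hCT
      apply hST
      rw [(split_pair 𝒮 h𝒮' hS hCS).2.2, (split_pair 𝒮 h𝒮' hT hCT).2.2]
    rw [show Cl 𝒮 = 𝒮.biUnion id from rfl, Finset.sum_biUnion hdisj]
    refine Finset.sum_congr rfl fun S hS => ?_
    obtain ⟨A, B, hA, hB, hU, hI, rfl⟩ := h𝒮' S hS
    have hBA : B = Aᶜ := by
      ext x
      simp only [Finset.mem_compl]
      constructor
      · intro hxB hxA
        have : x ∈ A ∩ B := Finset.mem_inter.2 ⟨hxA, hxB⟩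
        rw [hI] at this
        exact absurd this (Finset.notMem_empty x)
      · intro hxA
        have : x ∈ A ∪ B := by rw [hU]; exact Finset.mem_univ x
        rcases Finset.mem_union.1 this with h | h
        · exact absurd h hxA
        · exact h
    subst hBA
    have hAne : A ≠ Aᶜ := by
      intro h
      obtain ⟨x, hx⟩ := hA
      have : x ∈ A ∩ Aᶜ := Finset.mem_inter.2 ⟨hx, h ▸ hx⟩
      rw [hI] at this
      exact absurd this (Finset.notMem_empty x)
    rw [show (id ({A, Aᶜ} : Finset (Finset α))) = {A, Aᶜ} from rfl]
    rw [Finset.sum_pair hAne]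
    have hgA : g A = (1 / 2) * f {A, Aᶜ} := by
      rw [hg, hf]
      simp only [dif_pos hS]
    have hgAc : g Aᶜ = (1 / 2) * f {A, Aᶜ} := by
      have hkey : ({Aᶜ, Aᶜᶜ} : Finset (Finset α)) = {A, Aᶜ} := by
        rw [compl_compl, Finset.pair_comm]
      rw [hg, hf]
      simp only [hkey]
      rw [dif_pos hS, dif_pos hS]
    rw [hgA, hgAc]
    ring
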